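/- Let N ≥ 1 be an integer and let X and Y be independent random variables each with the Gamma(N,1) distribution. Fix θ ∈ (0,1) and η, d₁, d₂, γ > 0. Then lim_{ρ→∞} (ρ^N / ln ρ) · Prob( min( (1−θ)·ρ·X/d₁ , (η·θ·ρ/(d₁·d₂))·X·Y ) < γ ) = (d₁·d₂·γ/(η·θ))^N / (Γ(N)·Γ(N+1)). In particular the outage probability of the SNR upper bound decays like ρ^{−N}·ln ρ, so the system achieves diversity order N. -/

import Mathlib

open MeasureTheory ProbabilityTheory Filter

namespace OutageAux

open Set
open scoped ENNReal

lemma Gpos (m : ℕ) : 0 < Real.Gamma ((m : ℝ) + 1) :=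
  Real.Gamma_pos_of_pos (by positivity)

lemma gpdf_eq (m : ℕ) {x : ℝ} (hx : 0 ≤ x) :
    gammaPDF ((m : ℝ) + 1) 1 x
      = ENNReal.ofReal (x ^ m * Real.exp (-x) / Real.Gamma ((m : ℝ) + 1)) := by
  rw [gammaPDF_of_nonneg hx]
  congr 1
  rw [Real.one_rpow, show ((m : ℝ) + 1) - 1 = ((m : ℕ) : ℝ) by norm_num,
    Real.rpow_natCast]
  rw [one_mul]
  ring

lemma cdf_up (m : ℕ) {u : ℝ} (hu : 0 ≤ u) :
    gammaMeasure ((m : ℝ) + 1) 1 (Iio u)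
      ≤ ENNReal.ofReal (u ^ (m + 1) / (((m : ℝ) + 1) * Real.Gamma ((m : ℝ) + 1))) := by
  have hG := Gpos m
  rw [gammaMeasure, withDensity_apply _ measurableSet_Iio]
  calc ∫⁻ x in Iio u, gammaPDF ((m:ℝ)+1) 1 x
      ≤ (∫⁻ x in Iio 0, gammaPDF ((m:ℝ)+1) 1 x)
        + ∫⁻ x in Ico 0 u, gammaPDF ((m:ℝ)+1) 1 x := by
        refine le_trans (lintegral_mono_set ?_) (lintegral_union_le _ _ _)
        intro x hx
        rcases lt_or_ge x 0 with h | h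
        · exact Or.inl h
        · exact Or.inr ⟨h, hx⟩
    _ = ∫⁻ x in Ico 0 u, gammaPDF ((m:ℝ)+1) 1 x := by
        rw [lintegral_gammaPDF_of_nonpos le_rfl, zero_add]
    _ ≤ ∫⁻ x in Ico 0 u, ENNReal.ofReal (x ^ m / Real.Gamma ((m:ℝ)+1)) := by
        refine setLIntegral_mono' measurableSet_Ico fun x hx => ?_
        rw [gpdf_eq m hx.1]
        apply ENNReal.ofReal_le_ofReal
        rw [div_le_div_iff_of_pos_right hG]
        calc x ^ m * Real.exp (-x) ≤ x ^ m * 1 := by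
              refine mul_le_mul_of_nonneg_left ?_ (pow_nonneg hx.1 m)
              exact Real.exp_le_one_iff.mpr (by linarith [hx.1])
          _ = x ^ m := mul_one _
    _ = ENNReal.ofReal (∫ x in Ico 0 u, x ^ m / Real.Gamma ((m:ℝ)+1)) := by
        rw [ofReal_integral_eq_lintegral_ofReal]
        · exact (((continuous_pow m).div_const _).continuousOn.integrableOn_Icc).mono_set
            Ico_subset_Icc_self
        · exact (ae_restrict_iff' measurableSet_Ico).2 (ae_of_all _ fun x hx =>
            div_nonneg (pow_nonneg hx.1 m) hG.le)
    _ = ENNReal.ofReal (u ^ (m + 1) / (((m : ℝ) + 1) * Real.Gamma ((m:ℝ)+1))) := by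
        congr 1
        rw [integral_Ico_eq_integral_Ioo, ← integral_Ioc_eq_integral_Ioo, ← intervalIntegral.integral_of_le hu,
          intervalIntegral.integral_div, integral_pow]
        push_cast
        rw [zero_pow (by omega)]
        field_simp
        ring

lemma cdf_lo (m : ℕ) {v : ℝ} (hv : 0 < v) :
    ENNReal.ofReal (v ^ (m + 1) * Real.exp (-v) / (((m : ℝ) + 1) * Real.Gamma ((m : ℝ) + 1)))
      ≤ gammaMeasure ((m : ℝ) + 1) 1 (Iio v) := by
  have hG := Gpos m
  rw [gammaMeasure, withDensity_apply _ measurableSet_Iio]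
  calc ENNReal.ofReal (v ^ (m + 1) * Real.exp (-v) / (((m : ℝ) + 1) * Real.Gamma ((m:ℝ)+1)))
      = ENNReal.ofReal (∫ x in Ico 0 v, x ^ m * Real.exp (-v) / Real.Gamma ((m:ℝ)+1)) := by
        congr 1
        rw [integral_Ico_eq_integral_Ioo, ← integral_Ioc_eq_integral_Ioo, ← intervalIntegral.integral_of_le hv.le]
        have : ∀ x : ℝ, x ^ m * Real.exp (-v) / Real.Gamma ((m:ℝ)+1)
            = x ^ m * (Real.exp (-v) / Real.Gamma ((m:ℝ)+1)) := fun x => by ring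
        simp_rw [this]
        rw [intervalIntegral.integral_mul_const, integral_pow]
        push_cast
        rw [zero_pow (by omega)]
        field_simp
        ring
    _ ≤ ∫⁻ x in Ico 0 v, ENNReal.ofReal (x ^ m * Real.exp (-v) / Real.Gamma ((m:ℝ)+1)) := by
        rw [ofReal_integral_eq_lintegral_ofReal]
        · exact ((((continuous_pow m).mul continuous_const).div_const _).continuousOn.integrableOn_Icc).mono_set
            Ico_subset_Icc_self
        · exact (ae_restrict_iff' measurableSet_Ico).2 (ae_of_all _ fun x hx =>
            div_nonneg (mul_nonneg (pow_nonneg hx.1 m) (Real.exp_nonneg _)) hG.le)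
    _ ≤ ∫⁻ x in Ico 0 v, gammaPDF ((m:ℝ)+1) 1 x := by
        refine setLIntegral_mono' measurableSet_Ico fun x hx => ?_
        rw [gpdf_eq m hx.1]
        apply ENNReal.ofReal_le_ofReal
        rw [div_le_div_iff_of_pos_right hG]
        exact mul_le_mul_of_nonneg_left (Real.exp_le_exp.mpr (by linarith [hx.2])) (pow_nonneg hx.1 m)
    _ ≤ ∫⁻ x in Iio v, gammaPDF ((m:ℝ)+1) 1 x :=
        lintegral_mono_set fun x hx => hx.2


lemma measurable_setS (s t : ℝ) :
    MeasurableSet {p : ℝ × ℝ | p.1 < s ∨ p.1 * p.2 < t} := by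
  have : {p : ℝ × ℝ | p.1 < s ∨ p.1 * p.2 < t}
      = {p : ℝ × ℝ | p.1 < s} ∪ {p : ℝ × ℝ | p.1 * p.2 < t} := by
    ext p; simp [Set.mem_setOf_eq]
  rw [this]
  exact (measurableSet_lt measurable_fst measurable_const).union
    (measurableSet_lt (measurable_fst.mul measurable_snd) measurable_const)

lemma measurable_cdfmap (m : ℕ) (t : ℝ) :
    Measurable (fun x : ℝ => gammaMeasure ((m : ℝ) + 1) 1 (Iio (t / x))) := by
  have h1 : Monotone (fun u : ℝ => gammaMeasure ((m : ℝ) + 1) 1 (Iio u)) :=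
    fun u v huv => measure_mono (Iio_subset_Iio huv)
  exact h1.measurable.comp (measurable_const.div measurable_id)

lemma prod_up (m : ℕ) {s t c : ℝ} (hs : 0 < s) (ht : 0 < t) (hc : c = max s t)
    (hc1 : c ≤ 1) :
    (gammaMeasure ((m:ℝ)+1) 1).prod (gammaMeasure ((m:ℝ)+1) 1)
        {p : ℝ × ℝ | p.1 < s ∨ p.1 * p.2 < t}
      ≤ ENNReal.ofReal (c ^ (m+1) / (((m:ℝ)+1) * Real.Gamma ((m:ℝ)+1))
          + t ^ (m+1) * (1 - Real.log c)
            / (((m:ℝ)+1) * Real.Gamma ((m:ℝ)+1) ^ 2)) := by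
  set G := Real.Gamma ((m:ℝ)+1) with hGdef
  have hG : 0 < G := Gpos m
  set μ := gammaMeasure ((m:ℝ)+1) 1 with hμdef
  have hProb : IsProbabilityMeasure μ := isProbabilityMeasure_gammaMeasure (by positivity) one_pos
  have hc0 : 0 < c := hc ▸ lt_max_of_lt_left hs
  have hS := measurable_setS s t
  rw [Measure.prod_apply hS]
  have key : ∀ x : ℝ, μ (Prod.mk x ⁻¹' {p : ℝ × ℝ | p.1 < s ∨ p.1 * p.2 < t})
      ≤ (Iio c).indicator (fun _ => (1 : ℝ≥0∞)) x
        + (Ici c).indicator (fun x => μ (Iio (t / x))) x := by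
    intro x
    by_cases hx : x < c
    · have h2 : (Ici c).indicator (fun x => μ (Iio (t / x))) x = 0 :=
        Set.indicator_of_notMem (by simpa using hx) _
      rw [Set.indicator_of_mem (Set.mem_Iio.2 hx), h2, add_zero]
      exact prob_le_one
    · push_neg at hx
      have hx0 : 0 < x := lt_of_lt_of_le hc0 hx
      have hsx : s ≤ x := le_trans (hc ▸ le_max_left s t) hx
      have hset : Prod.mk x ⁻¹' {p : ℝ × ℝ | p.1 < s ∨ p.1 * p.2 < t} = Iio (t / x) := by
        ext y
        simp only [Set.mem_preimage, Set.mem_setOf_eq, Set.mem_Iio]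
        constructor
        · rintro (h | h)
          · exact absurd h (not_lt.2 hsx)
          · rw [lt_div_iff₀ hx0]; linarith [mul_comm x y]
        · intro h
          right
          rw [lt_div_iff₀ hx0] at h
          linarith [mul_comm x y]
      rw [hset, Set.indicator_of_notMem (by simpa using not_lt.2 hx),
        Set.indicator_of_mem (by simpa using hx), zero_add]
  refine le_trans (lintegral_mono key) ?_
  rw [lintegral_add_left (Measurable.indicator measurable_const measurableSet_Iio :
    Measurable ((Iio c).indicator (fun _ => (1:ℝ≥0∞))))]
  rw [lintegral_indicator measurableSet_Iio, lintegral_indicator measurableSet_Ici]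
  have h1 : ∫⁻ _ in Iio c, (1 : ℝ≥0∞) ∂μ ≤ ENNReal.ofReal (c ^ (m+1) / (((m:ℝ)+1) * G)) := by
    rw [setLIntegral_one]
    exact cdf_up m hc0.le
  have h2 : ∫⁻ x in Ici c, μ (Iio (t / x)) ∂μ
      ≤ ENNReal.ofReal (t ^ (m+1) * (1 - Real.log c) / (((m:ℝ)+1) * G ^ 2)) := by
    set K : ℝ := t ^ (m+1) / (((m:ℝ)+1) * G ^ 2) with hK
    have hKpos : 0 < K := by positivity
    have hpdf : Measurable (gammaPDF ((m:ℝ)+1) 1) :=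
      (measurable_gammaPDFReal _ _).ennreal_ofReal
    have hg : Measurable (fun x : ℝ =>
        ENNReal.ofReal ((t / x) ^ (m+1) / (((m:ℝ)+1) * G))) :=
      (((measurable_const.div measurable_id).pow_const (m+1)).div_const _).ennreal_ofReal
    have step1 : ∫⁻ x in Ici c, μ (Iio (t / x)) ∂μ
        ≤ ∫⁻ x in Ici c, ENNReal.ofReal ((t / x) ^ (m+1) / (((m:ℝ)+1) * G)) ∂μ := by
      refine setLIntegral_mono' measurableSet_Ici fun x hx => ?_
      have hx0 : 0 < x := lt_of_lt_of_le hc0 hx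
      exact cdf_up m (div_nonneg ht.le hx0.le)
    have step2 : ∫⁻ x in Ici c, ENNReal.ofReal ((t / x) ^ (m+1) / (((m:ℝ)+1) * G)) ∂μ
        = ∫⁻ x in Ici c, ENNReal.ofReal (K * (Real.exp (-x) * x⁻¹)) ∂(volume : Measure ℝ) := by
      rw [hμdef, gammaMeasure, restrict_withDensity measurableSet_Ici,
        lintegral_withDensity_eq_lintegral_mul _ hpdf hg]
      refine setLIntegral_congr_fun measurableSet_Ici (fun x hx => ?_)
      have hx0 : 0 < x := lt_of_lt_of_le hc0 hx
      simp only [Pi.mul_apply]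
      rw [gpdf_eq m hx0.le, ← ENNReal.ofReal_mul (by positivity)]
      congr 1
      rw [div_pow, hK]
      field_simp
      rw [pow_succ]
      ring
    have hsplit : ∫⁻ x in Ici c, ENNReal.ofReal (K * (Real.exp (-x) * x⁻¹)) ∂(volume : Measure ℝ)
        ≤ (∫⁻ x in Ico c 1, ENNReal.ofReal (K * (Real.exp (-x) * x⁻¹)) ∂(volume : Measure ℝ))
          + ∫⁻ x in Ici 1, ENNReal.ofReal (K * (Real.exp (-x) * x⁻¹)) ∂(volume : Measure ℝ) := by
      refine le_trans (lintegral_mono_set ?_) (lintegral_union_le _ _ _)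
      intro x hx
      rcases lt_or_ge x 1 with h | h
      · exact Or.inl ⟨hx, h⟩
      · exact Or.inr h
    have pieceA : ∫⁻ x in Ico c 1, ENNReal.ofReal (K * (Real.exp (-x) * x⁻¹)) ∂(volume : Measure ℝ)
        ≤ ENNReal.ofReal (K * Real.log c⁻¹) := by
      have mono : ∫⁻ x in Ico c 1, ENNReal.ofReal (K * (Real.exp (-x) * x⁻¹)) ∂(volume : Measure ℝ)
          ≤ ∫⁻ x in Ico c 1, ENNReal.ofReal (K * x⁻¹) ∂(volume : Measure ℝ) := by
        refine setLIntegral_mono' measurableSet_Ico fun x hx => ?_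
        have hx0 : 0 < x := lt_of_lt_of_le hc0 hx.1
        refine ENNReal.ofReal_le_ofReal ?_
        refine mul_le_mul_of_nonneg_left ?_ hKpos.le
        calc Real.exp (-x) * x⁻¹ ≤ 1 * x⁻¹ := by
              refine mul_le_mul_of_nonneg_right ?_ (inv_nonneg.2 hx0.le)
              exact Real.exp_le_one_iff.mpr (by linarith)
          _ = x⁻¹ := one_mul _
      refine le_trans mono (le_of_eq ?_)
      rw [← ofReal_integral_eq_lintegral_ofReal]
      · congr 1
        rw [integral_Ico_eq_integral_Ioo, ← integral_Ioc_eq_integral_Ioo,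
          ← intervalIntegral.integral_of_le hc1, intervalIntegral.integral_const_mul,
          integral_inv]
        · rw [one_div]
        · rw [Set.uIcc_of_le hc1]
          exact fun h => absurd h.1 (not_le.2 hc0)
      · refine IntegrableOn.mono_set ?_ Ico_subset_Icc_self
        refine ContinuousOn.integrableOn_Icc ?_
        exact continuousOn_const.mul (continuousOn_inv₀.mono fun x hx => ne_of_gt (lt_of_lt_of_le hc0 hx.1))
      · refine (ae_restrict_iff' measurableSet_Ico).2 (ae_of_all _ fun x hx => ?_)
        have hx0 : 0 < x := lt_of_lt_of_le hc0 hx.1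
        positivity
    have pieceB : ∫⁻ x in Ici 1, ENNReal.ofReal (K * (Real.exp (-x) * x⁻¹)) ∂(volume : Measure ℝ)
        ≤ ENNReal.ofReal (K * Real.exp (-1)) := by
      have hIciIoi : (volume : Measure ℝ).restrict (Ici 1) = volume.restrict (Ioi 1) :=
        (Measure.restrict_congr_set Ioi_ae_eq_Ici).symm
      have mono : ∫⁻ x in Ici 1, ENNReal.ofReal (K * (Real.exp (-x) * x⁻¹)) ∂(volume : Measure ℝ)
          ≤ ∫⁻ x in Ici 1, ENNReal.ofReal (K * Real.exp (-x)) ∂(volume : Measure ℝ) := by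
        refine setLIntegral_mono' measurableSet_Ici fun x hx => ?_
        refine ENNReal.ofReal_le_ofReal ?_
        refine mul_le_mul_of_nonneg_left ?_ hKpos.le
        refine mul_le_of_le_one_right (Real.exp_nonneg _) ?_
        rw [inv_le_one_iff₀]
        right; exact hx
      refine le_trans mono (le_of_eq ?_)
      rw [hIciIoi, ← ofReal_integral_eq_lintegral_ofReal]
      · rw [MeasureTheory.integral_const_mul, integral_exp_neg_Ioi]
      · have := (exp_neg_integrableOn_Ioi 1 one_pos).const_mul K
        simpa using this
      · exact ae_of_all _ fun x => by positivity
    calc ∫⁻ x in Ici c, μ (Iio (t / x)) ∂μ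
        ≤ ENNReal.ofReal (K * Real.log c⁻¹) + ENNReal.ofReal (K * Real.exp (-1)) := by
          rw [step2] at step1
          exact le_trans step1 (le_trans hsplit (add_le_add pieceA pieceB))
      _ ≤ ENNReal.ofReal (t ^ (m+1) * (1 - Real.log c) / (((m:ℝ)+1) * G ^ 2)) := by
          rw [← ENNReal.ofReal_add
            (mul_nonneg hKpos.le (by rw [Real.log_inv]; linarith [Real.log_nonpos hc0.le hc1]))
            (by positivity)]
          refine ENNReal.ofReal_le_ofReal ?_
          rw [Real.log_inv]
          have he : Real.exp (-1) ≤ 1 := Real.exp_le_one_iff.mpr (by norm_num)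
          have hKform : t ^ (m+1) * (1 - Real.log c) / (((m:ℝ)+1) * G ^ 2)
              = K * (1 - Real.log c) := by rw [hK]; ring
          rw [hKform]
          nlinarith [hKpos.le]
  calc (∫⁻ _ in Iio c, (1:ℝ≥0∞) ∂μ) + ∫⁻ x in Ici c, μ (Iio (t / x)) ∂μ
      ≤ ENNReal.ofReal (c ^ (m+1) / (((m:ℝ)+1) * G))
        + ENNReal.ofReal (t ^ (m+1) * (1 - Real.log c) / (((m:ℝ)+1) * G ^ 2)) :=
        add_le_add h1 h2
    _ = _ := by
        rw [← ENNReal.ofReal_add (by positivity) ?_]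
        have : (0:ℝ) ≤ 1 - Real.log c := by
          have := Real.log_nonpos hc0.le hc1
          linarith
        positivity


lemma prod_lo (m : ℕ) (s : ℝ) {t A : ℝ} (ht : 0 < t) (hA : 0 < A) (hA1 : A ≤ 2⁻¹)
    (htA : 2 * t ≤ A) :
    ENNReal.ofReal ((t ^ (m+1) / (((m:ℝ)+1) * Real.Gamma ((m:ℝ)+1) ^ 2))
        * (Real.log 2⁻¹ + 2*t - 2⁻¹ - Real.log A - t * A⁻¹ + A))
      ≤ (gammaMeasure ((m:ℝ)+1) 1).prod (gammaMeasure ((m:ℝ)+1) 1)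
          {p : ℝ × ℝ | p.1 < s ∨ p.1 * p.2 < t} := by
  set G := Real.Gamma ((m:ℝ)+1) with hGdef
  have hG : 0 < G := Gpos m
  set μ := gammaMeasure ((m:ℝ)+1) 1 with hμdef
  have hProb : IsProbabilityMeasure μ := isProbabilityMeasure_gammaMeasure (by positivity) one_pos
  set K : ℝ := t ^ (m+1) / (((m:ℝ)+1) * G ^ 2) with hK
  have hKpos : 0 < K := by positivity
  have hS := measurable_setS s t
  have hpdf : Measurable (gammaPDF ((m:ℝ)+1) 1) :=
    (measurable_gammaPDFReal _ _).ennreal_ofReal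
  have hg : Measurable (fun x : ℝ =>
      ENNReal.ofReal ((t / x) ^ (m+1) * Real.exp (-(t / x)) / (((m:ℝ)+1) * G))) := by
    refine Measurable.ennreal_ofReal ?_
    exact (((measurable_const.div measurable_id).pow_const (m+1)).mul
      ((measurable_const.div measurable_id).neg.exp)).div_const _
  rw [Measure.prod_apply hS]
  have step0 : ∫⁻ x in Icc A 2⁻¹, μ (Iio (t / x)) ∂μ
      ≤ ∫⁻ x, μ (Prod.mk x ⁻¹' {p : ℝ × ℝ | p.1 < s ∨ p.1 * p.2 < t}) ∂μ := by
    refine le_trans (setLIntegral_mono' measurableSet_Icc fun x hx => ?_)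
      (setLIntegral_le_lintegral _ _)
    have hx0 : 0 < x := lt_of_lt_of_le hA hx.1
    refine measure_mono fun y hy => ?_
    simp only [Set.mem_Iio] at hy
    simp only [Set.mem_preimage, Set.mem_setOf_eq]
    right
    rw [lt_div_iff₀ hx0] at hy
    linarith [mul_comm x y]
  refine le_trans ?_ step0
  have step1 : ∫⁻ x in Icc A 2⁻¹,
      ENNReal.ofReal ((t / x) ^ (m+1) * Real.exp (-(t / x)) / (((m:ℝ)+1) * G)) ∂μ
      ≤ ∫⁻ x in Icc A 2⁻¹, μ (Iio (t / x)) ∂μ := by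
    refine setLIntegral_mono' measurableSet_Icc fun x hx => ?_
    have hx0 : 0 < x := lt_of_lt_of_le hA hx.1
    exact cdf_lo m (div_pos ht hx0)
  refine le_trans ?_ step1
  rw [hμdef, gammaMeasure, restrict_withDensity measurableSet_Icc,
    lintegral_withDensity_eq_lintegral_mul _ hpdf hg]
  have step2 : ∫⁻ x in Icc A 2⁻¹,
      ENNReal.ofReal (K * (x⁻¹ - t * (x^2)⁻¹ - 1)) ∂(volume : Measure ℝ)
      ≤ ∫⁻ x in Icc A 2⁻¹,
        (gammaPDF ((m:ℝ)+1) 1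
          * fun x => ENNReal.ofReal ((t / x) ^ (m+1) * Real.exp (-(t / x)) / (((m:ℝ)+1) * G))) x
          ∂(volume : Measure ℝ) := by
    refine setLIntegral_mono' measurableSet_Icc fun x hx => ?_
    have hx0 : 0 < x := lt_of_lt_of_le hA hx.1
    simp only [Pi.mul_apply]
    rw [gpdf_eq m hx0.le, ← ENNReal.ofReal_mul (by positivity)]
    refine ENNReal.ofReal_le_ofReal ?_
    have hform : x ^ m * Real.exp (-x) / G
        * ((t / x) ^ (m+1) * Real.exp (-(t / x)) / (((m:ℝ)+1) * G))
        = K * (Real.exp (-(x + t / x)) * x⁻¹) := by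
      rw [div_pow, hK,
        show Real.exp (-(x + t/x)) = Real.exp (-x) * Real.exp (-(t/x)) from by
          rw [← Real.exp_add]; congr 1; ring]
      field_simp
      ring
    rw [hform]
    refine mul_le_mul_of_nonneg_left ?_ hKpos.le
    have hexp : 1 - (x + t / x) ≤ Real.exp (-(x + t / x)) := by
      have := Real.add_one_le_exp (-(x + t / x))
      linarith
    have heq : (1 - (x + t / x)) * x⁻¹ = x⁻¹ - t * (x^2)⁻¹ - 1 := by
      field_simp
      ring
    calc x⁻¹ - t * (x^2)⁻¹ - 1 = (1 - (x + t / x)) * x⁻¹ := heq.symm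
      _ ≤ Real.exp (-(x + t / x)) * x⁻¹ :=
          mul_le_mul_of_nonneg_right hexp (inv_nonneg.2 hx0.le)
  refine le_trans ?_ step2
  have hnn : ∀ x ∈ Icc A 2⁻¹, 0 ≤ K * (x⁻¹ - t * (x^2)⁻¹ - 1) := by
    intro x hx
    have hx0 : 0 < x := lt_of_lt_of_le hA hx.1
    have h1 : x⁻¹ - t * (x^2)⁻¹ - 1 = (x - t - x^2) * (x^2)⁻¹ := by field_simp
    have h2 : 0 ≤ x - t - x^2 := by nlinarith [hx.1, hx.2, htA, hA]
    rw [h1]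
    positivity
  rw [← ofReal_integral_eq_lintegral_ofReal]
  · refine ENNReal.ofReal_le_ofReal (le_of_eq ?_)
    rw [integral_Icc_eq_integral_Ioc, ← intervalIntegral.integral_of_le hA1]
    have hFTC : ∫ x in A..2⁻¹, K * (x⁻¹ - t * (x^2)⁻¹ - 1)
        = (K * (Real.log 2⁻¹ + t * (2⁻¹)⁻¹ - 2⁻¹)) - (K * (Real.log A + t * A⁻¹ - A)) := by
      refine intervalIntegral.integral_eq_sub_of_hasDerivAt (f := fun x => K * (Real.log x + t * x⁻¹ - x)) ?_ ?_
      · intro x hx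
        rw [Set.uIcc_of_le hA1] at hx
        have hx0 : 0 < x := lt_of_lt_of_le hA hx.1
        have h1 : HasDerivAt (fun x : ℝ => Real.log x + t * x⁻¹ - x)
            (x⁻¹ + t * (-((x^2)⁻¹)) - 1) x := by
          exact ((Real.hasDerivAt_log hx0.ne').add ((hasDerivAt_inv hx0.ne').const_mul t)).sub
            (hasDerivAt_id x)
        have h2 := h1.const_mul K
        convert h2 using 1
        rfl
        ring
      · refine ContinuousOn.intervalIntegrable ?_
        rw [Set.uIcc_of_le hA1]
        have hne : ∀ x ∈ Icc A 2⁻¹, x ≠ 0 :=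
          fun x hx => (lt_of_lt_of_le hA hx.1).ne'
        refine continuousOn_const.mul (ContinuousOn.sub (ContinuousOn.sub ?_ ?_) continuousOn_const)
        · exact continuousOn_inv₀.mono fun x hx => hne x hx
        · refine continuousOn_const.mul (ContinuousOn.inv₀ (continuousOn_pow 2) ?_)
          exact fun x hx => pow_ne_zero 2 (hne x hx)
    rw [hFTC]
    have : t * (2⁻¹ : ℝ)⁻¹ = 2 * t := by norm_num; ring
    rw [this]
    ring
  · refine IntegrableOn.mono_set ?_ (le_refl _)
    refine ContinuousOn.integrableOn_Icc ?_
    have hne : ∀ x ∈ Icc A 2⁻¹, x ≠ 0 := fun x hx => (lt_of_lt_of_le hA hx.1).ne'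
    refine continuousOn_const.mul (ContinuousOn.sub (ContinuousOn.sub ?_ ?_) continuousOn_const)
    · exact continuousOn_inv₀.mono fun x hx => hne x hx
    · refine continuousOn_const.mul (ContinuousOn.inv₀ (continuousOn_pow 2) ?_)
      exact fun x hx => pow_ne_zero 2 (hne x hx)
  · exact (ae_restrict_iff' measurableSet_Icc).2 (ae_of_all _ hnn)


lemma lo_eq (m : ℕ) {t₀ G ρ : ℝ} (ht₀ : 0 < t₀) (hρ : 0 < ρ) (hL : 0 < Real.log ρ)
    (hG : 0 < G) :
    t₀^(m+1)/(((m:ℝ)+1)*G^2) *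
      ((Real.log 2⁻¹ - 2⁻¹ - Real.log t₀) * (Real.log ρ)⁻¹
        + (2*t₀) * (ρ⁻¹ * (Real.log ρ)⁻¹)
        - Real.log (Real.log ρ) / Real.log ρ
        - (Real.log ρ)⁻¹ * (Real.log ρ)⁻¹
        + t₀ * ρ⁻¹ + 1)
    = ρ^(m+1)/Real.log ρ *
      (((t₀/ρ)^(m+1) / (((m:ℝ)+1)*G^2)) *
        (Real.log 2⁻¹ + 2*(t₀/ρ) - 2⁻¹ - Real.log (t₀*Real.log ρ/ρ)
          - (t₀/ρ)*(t₀*Real.log ρ/ρ)⁻¹ + t₀*Real.log ρ/ρ)) := by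
  rw [Real.log_div (by positivity) hρ.ne', Real.log_mul ht₀.ne' hL.ne', div_pow]
  field_simp
  ring

lemma hi_eq (m : ℕ) {t₀ c₀ G ρ : ℝ} (hc₀ : 0 < c₀) (hρ : 0 < ρ) (hL : 0 < Real.log ρ)
    (hG : 0 < G) :
    ρ^(m+1)/Real.log ρ * ((c₀/ρ)^(m+1)/(((m:ℝ)+1)*G)
        + (t₀/ρ)^(m+1)*(1 - Real.log (c₀/ρ))/(((m:ℝ)+1)*G^2))
    = c₀^(m+1)/(((m:ℝ)+1)*G) * (Real.log ρ)⁻¹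
        + t₀^(m+1)/(((m:ℝ)+1)*G^2) * ((1 - Real.log c₀)*(Real.log ρ)⁻¹ + 1) := by
  rw [Real.log_div hc₀.ne' hρ.ne', div_pow, div_pow]
  field_simp
  ring

end OutageAux

open OutageAux in
/-- **Theorem 2** (high-SNR outage behavior of the noise-limited system): if `X, Y` are
independent `Gamma(N,1)` random variables, `θ ∈ (0,1)` and `η, d₁, d₂, γ > 0`, then
`(ρ^N / ln ρ) · Prob(min((1−θ)ρX/d₁, ηθρXY/(d₁d₂)) < γ) → (d₁d₂γ/(ηθ))^N/(Γ(N)Γ(N+1))`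
as `ρ → ∞`; in particular the outage probability decays like `ρ^{−N} ln ρ`, i.e. the system
achieves diversity order `N`. -/
theorem outage_noise_limited_high_snr
    {Ω : Type*} [MeasureSpace Ω] [IsProbabilityMeasure (ℙ : Measure Ω)]
    (N : ℕ) (hN : 1 ≤ N) (X Y : Ω → ℝ)
    (hXY : IndepFun X Y ℙ)
    (hX : Measure.map X ℙ = gammaMeasure N 1)
    (hY : Measure.map Y ℙ = gammaMeasure N 1)
    (θ η d₁ d₂ γ : ℝ) (hθ : θ ∈ Set.Ioo (0 : ℝ) 1)
    (hη : 0 < η) (hd₁ : 0 < d₁) (hd₂ : 0 < d₂) (hγ : 0 < γ) :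
    Tendsto (fun ρ : ℝ => ρ ^ N / Real.log ρ *
        (ℙ {ω | min ((1 - θ) * ρ * X ω / d₁)
            (η * θ * ρ / (d₁ * d₂) * (X ω * Y ω)) < γ}).toReal)
      atTop
      (nhds ((d₁ * d₂ * γ / (η * θ)) ^ N / (Real.Gamma N * Real.Gamma (N + 1)))) := by
  obtain ⟨hθ0, hθ1⟩ := hθ
  have h1θ : 0 < 1 - θ := by linarith
  obtain ⟨m, rfl⟩ : ∃ m, N = m + 1 := ⟨N - 1, (Nat.succ_pred_eq_of_pos hN).symm⟩
  have hcast : ((m + 1 : ℕ) : ℝ) = (m : ℝ) + 1 := by push_cast; ring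
  rw [hcast] at hX hY
  set G := Real.Gamma ((m:ℝ) + 1) with hGdef
  have hG : 0 < G := Gpos m
  set μ := gammaMeasure ((m:ℝ)+1) 1 with hμdef
  have hProb : IsProbabilityMeasure μ := isProbabilityMeasure_gammaMeasure (by positivity) one_pos
  -- a.e.-measurability
  have hXm : AEMeasurable X ℙ := by
    by_contra h
    have h1 : μ Set.univ = 1 := measure_univ
    rw [← hX, Measure.map_of_not_aemeasurable h] at h1
    simp at h1
  have hYm : AEMeasurable Y ℙ := by
    by_contra h
    have h1 : μ Set.univ = 1 := measure_univ
    rw [← hY, Measure.map_of_not_aemeasurable h] at h1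
    simp at h1
  have hmap : Measure.map (fun ω => (X ω, Y ω)) ℙ = μ.prod μ := by
    have h := (indepFun_iff_map_prod_eq_prod_map_map hXm hYm).mp hXY
    rw [hX, hY] at h
    exact h
  set s₀ : ℝ := γ * d₁ / (1 - θ) with hs₀def
  set t₀ : ℝ := γ * (d₁ * d₂) / (η * θ) with ht₀def
  have hs₀ : 0 < s₀ := by positivity
  have ht₀ : 0 < t₀ := by positivity
  set c₀ : ℝ := max s₀ t₀ with hc₀def
  have hc₀ : 0 < c₀ := lt_max_of_lt_left hs₀
  -- probability identification
  have hP : ∀ ρ : ℝ, 0 < ρ →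
      (ℙ {ω | min ((1 - θ) * ρ * X ω / d₁)
          (η * θ * ρ / (d₁ * d₂) * (X ω * Y ω)) < γ})
        = (μ.prod μ) {p : ℝ × ℝ | p.1 < s₀ / ρ ∨ p.1 * p.2 < t₀ / ρ} := by
    intro ρ hρ
    have hsetEq : {ω | min ((1 - θ) * ρ * X ω / d₁)
          (η * θ * ρ / (d₁ * d₂) * (X ω * Y ω)) < γ}
        = (fun ω => (X ω, Y ω)) ⁻¹'
            {p : ℝ × ℝ | p.1 < s₀ / ρ ∨ p.1 * p.2 < t₀ / ρ} := by
      ext ω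
      simp only [Set.mem_setOf_eq, Set.mem_preimage, min_lt_iff]
      refine or_congr ?_ ?_
      · rw [div_lt_iff₀ hd₁, hs₀def, div_div, lt_div_iff₀ (by positivity)]
        constructor <;> intro h <;> nlinarith [h]
      · rw [div_mul_eq_mul_div, div_lt_iff₀ (by positivity), ht₀def, div_div,
          lt_div_iff₀ (by positivity)]
        constructor <;> intro h <;> nlinarith [h]
    rw [hsetEq, ← hmap,
      Measure.map_apply_of_aemeasurable (hXm.prodMk hYm) (measurable_setS _ _)]
  -- basic limits
  have l1 : Tendsto (fun ρ : ℝ => (Real.log ρ)⁻¹) atTop (nhds 0) :=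
    Real.tendsto_log_atTop.inv_tendsto_atTop
  have lbase : Tendsto (fun y : ℝ => Real.log y / y) atTop (nhds 0) :=
    Real.isLittleO_log_id_atTop.tendsto_div_nhds_zero
  have l2 : Tendsto (fun ρ : ℝ => Real.log (Real.log ρ) / Real.log ρ) atTop (nhds 0) :=
    lbase.comp Real.tendsto_log_atTop
  have l3 : Tendsto (fun ρ : ℝ => Real.log ρ / ρ) atTop (nhds 0) := lbase
  have l4 : Tendsto (fun ρ : ℝ => ρ⁻¹) atTop (nhds (0:ℝ)) := tendsto_inv_atTop_zero
  -- primed upper function and its limit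
  have hh'lim : Tendsto (fun ρ : ℝ => c₀^(m+1) / (((m:ℝ)+1) * G) * (Real.log ρ)⁻¹
      + t₀^(m+1)/(((m:ℝ)+1)*G^2) * ((1 - Real.log c₀) * (Real.log ρ)⁻¹ + 1)) atTop
      (nhds (t₀ ^ (m+1) / (((m:ℝ)+1) * G ^ 2))) := by
    have : Tendsto (fun ρ : ℝ => c₀^(m+1) / (((m:ℝ)+1) * G) * (Real.log ρ)⁻¹
        + t₀^(m+1)/(((m:ℝ)+1)*G^2) * ((1 - Real.log c₀) * (Real.log ρ)⁻¹ + 1)) atTop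
        (nhds (c₀^(m+1) / (((m:ℝ)+1) * G) * 0
          + t₀^(m+1)/(((m:ℝ)+1)*G^2) * ((1 - Real.log c₀) * 0 + 1))) :=
      ((l1.const_mul _)).add (((l1.const_mul _).add tendsto_const_nhds).const_mul _)
    simpa using this
  -- primed lower function and its limit
  have hg'lim : Tendsto (fun ρ : ℝ => t₀^(m+1)/(((m:ℝ)+1)*G^2) *
      ((Real.log 2⁻¹ - 2⁻¹ - Real.log t₀) * (Real.log ρ)⁻¹
        + (2*t₀) * (ρ⁻¹ * (Real.log ρ)⁻¹)
        - Real.log (Real.log ρ) / Real.log ρ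
        - (Real.log ρ)⁻¹ * (Real.log ρ)⁻¹
        + t₀ * ρ⁻¹ + 1)) atTop (nhds (t₀ ^ (m+1) / (((m:ℝ)+1) * G ^ 2))) := by
    have : Tendsto (fun ρ : ℝ => t₀^(m+1)/(((m:ℝ)+1)*G^2) *
        ((Real.log 2⁻¹ - 2⁻¹ - Real.log t₀) * (Real.log ρ)⁻¹
          + (2*t₀) * (ρ⁻¹ * (Real.log ρ)⁻¹)
          - Real.log (Real.log ρ) / Real.log ρ
          - (Real.log ρ)⁻¹ * (Real.log ρ)⁻¹
          + t₀ * ρ⁻¹ + 1)) atTop (nhds (t₀^(m+1)/(((m:ℝ)+1)*G^2) *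
        ((Real.log 2⁻¹ - 2⁻¹ - Real.log t₀) * 0 + (2*t₀) * (0 * 0) - 0 - 0 * 0
          + t₀ * 0 + 1))) := by
      refine Tendsto.const_mul _ ?_
      exact (((((l1.const_mul _).add ((l4.mul l1).const_mul _)).sub l2).sub (l1.mul l1)).add
        (l4.const_mul t₀)).add tendsto_const_nhds
    simpa using this
  -- eventual regime facts
  have hev1 : ∀ᶠ ρ : ℝ in atTop, (2:ℝ) ≤ Real.log ρ :=
    Real.tendsto_log_atTop.eventually_ge_atTop 2
  have hev2 : ∀ᶠ ρ : ℝ in atTop, t₀ * Real.log ρ / ρ ≤ 2⁻¹ := by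
    have h0 : Tendsto (fun ρ : ℝ => t₀ * (Real.log ρ / ρ)) atTop (nhds 0) := by
      simpa using l3.const_mul t₀
    have h := h0.eventually_le_const (show (0:ℝ) < 2⁻¹ by norm_num)
    filter_upwards [h] with ρ hρ
    calc t₀ * Real.log ρ / ρ = t₀ * (Real.log ρ / ρ) := by ring
      _ ≤ 2⁻¹ := hρ
  have hev3 : ∀ᶠ ρ : ℝ in atTop, c₀ ≤ ρ := eventually_ge_atTop c₀
  have hev0 : ∀ᶠ ρ : ℝ in atTop, (1:ℝ) < ρ := eventually_gt_atTop 1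
  -- the squeeze
  have hfinal : Tendsto (fun ρ : ℝ => ρ ^ (m+1) / Real.log ρ *
      (ℙ {ω | min ((1 - θ) * ρ * X ω / d₁)
          (η * θ * ρ / (d₁ * d₂) * (X ω * Y ω)) < γ}).toReal) atTop
      (nhds (t₀ ^ (m+1) / (((m:ℝ)+1) * G ^ 2))) := by
    refine tendsto_of_tendsto_of_tendsto_of_le_of_le' hg'lim hh'lim ?_ ?_
    · -- lower bound
      filter_upwards [hev0, hev1, hev2] with ρ h1ρ hlog2 hA2
      have hρ : 0 < ρ := lt_trans one_pos h1ρ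
      have hL : 0 < Real.log ρ := by linarith
      have hApos : 0 < t₀ * Real.log ρ / ρ := by positivity
      have h2t : 2 * (t₀ / ρ) ≤ t₀ * Real.log ρ / ρ := by
        rw [show 2 * (t₀ / ρ) = 2 * t₀ / ρ from by ring,
          div_le_div_iff_of_pos_right hρ]
        nlinarith
      have hlo := prod_lo m (s₀ / ρ) (t := t₀ / ρ) (by positivity) hApos hA2 h2t
      have hPval : ((t₀ / ρ) ^ (m+1) / (((m:ℝ)+1) * G ^ 2))
          * (Real.log 2⁻¹ + 2*(t₀/ρ) - 2⁻¹ - Real.log (t₀ * Real.log ρ / ρ)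
            - (t₀/ρ) * (t₀ * Real.log ρ / ρ)⁻¹ + t₀ * Real.log ρ / ρ)
          ≤ ((μ.prod μ) {p : ℝ × ℝ | p.1 < s₀ / ρ ∨ p.1 * p.2 < t₀ / ρ}).toReal :=
        (ENNReal.ofReal_le_iff_le_toReal (measure_ne_top _ _)).1 hlo
      rw [hP ρ hρ]
      have hmulle := mul_le_mul_of_nonneg_left hPval
        (le_of_lt (div_pos (by positivity) hL) :
          (0:ℝ) ≤ ρ ^ (m+1) / Real.log ρ)
      exact le_trans (le_of_eq (lo_eq m ht₀ hρ hL hG)) hmulle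
    · -- upper bound
      filter_upwards [hev0, hev1, hev3] with ρ h1ρ hlog2 hc₀ρ
      have hρ : 0 < ρ := lt_trans one_pos h1ρ
      have hL : 0 < Real.log ρ := by linarith
      have hcmax : c₀ / ρ = max (s₀ / ρ) (t₀ / ρ) := by
        rw [hc₀def, max_div_div_right hρ.le]
      have hc1 : c₀ / ρ ≤ 1 := (div_le_one hρ).2 hc₀ρ
      have hup := prod_up m (s := s₀ / ρ) (t := t₀ / ρ) (by positivity) (by positivity)
        hcmax hc1
      have hlognp : Real.log (c₀ / ρ) ≤ 0 := Real.log_nonpos (by positivity) hc1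
      have hupnn : (0:ℝ) ≤ (c₀/ρ) ^ (m+1) / (((m:ℝ)+1) * G)
          + (t₀/ρ) ^ (m+1) * (1 - Real.log (c₀/ρ)) / (((m:ℝ)+1) * G ^ 2) := by
        have h1 : (0:ℝ) ≤ 1 - Real.log (c₀/ρ) := by linarith
        have h2 : (0:ℝ) ≤ (t₀/ρ) ^ (m+1) * (1 - Real.log (c₀/ρ)) := by positivity
        positivity
      have hPle : ((μ.prod μ) {p : ℝ × ℝ | p.1 < s₀ / ρ ∨ p.1 * p.2 < t₀ / ρ}).toReal
          ≤ (c₀/ρ) ^ (m+1) / (((m:ℝ)+1) * G)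
            + (t₀/ρ) ^ (m+1) * (1 - Real.log (c₀/ρ)) / (((m:ℝ)+1) * G ^ 2) :=
        ENNReal.toReal_le_of_le_ofReal hupnn hup
      rw [hP ρ hρ]
      have hmulle := mul_le_mul_of_nonneg_left hPle
        (le_of_lt (div_pos (by positivity) hL) :
          (0:ℝ) ≤ ρ ^ (m+1) / Real.log ρ)
      exact le_trans hmulle (le_of_eq (hi_eq m hc₀ hρ hL hG))
  have hconst : (d₁ * d₂ * γ / (η * θ)) ^ (m+1)
      / (Real.Gamma ((m+1 : ℕ) : ℝ) * Real.Gamma (((m+1 : ℕ) : ℝ) + 1))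
      = t₀ ^ (m+1) / (((m:ℝ)+1) * G ^ 2) := by
    rw [hcast, Real.Gamma_add_one (by positivity : ((m:ℝ)+1) ≠ 0), ht₀def,
      show d₁ * d₂ * γ = γ * (d₁ * d₂) from by ring, ← hGdef]
    ring
  rw [hconst]
  exact hfinal
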